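/- If G is a connected graph, then any set S ⊆ G × (0,1) with a stairwell structure of odd height separates G × {0} from G × {1} in G × [0,1]. -/

import Mathlib

open Set Topology

/-- A subset of a space is *regular* if it is closed and has finitely many connected
components, each of which is non-degenerate. -/
def IsRegularSet {G : Type*} [TopologicalSpace G] (A : Set G) : Prop :=
  IsClosed A ∧ {C : Set G | ∃ x ∈ A, C = connectedComponentIn A x}.Finite ∧
    ∀ x ∈ A, (connectedComponentIn A x).Nontrivial

/-- A point of a graph is *ordinary* (neither a branch point nor an endpoint) if it has an
open neighborhood homeomorphic to an open interval. -/
def IsOrdinaryPoint {G : Type*} [TopologicalSpace G] (x : G) : Prop :=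
  ∃ U : Set G, IsOpen U ∧ x ∈ U ∧ Nonempty (U ≃ₜ Set.Ioo (0 : ℝ) 1)

/-- A topological space is a *graph* if it is a finite union of arcs which intersect
at most in endpoints. -/
def IsGraphSpace (G : Type*) [TopologicalSpace G] : Prop :=
  ∃ (n : ℕ) (f : Fin n → unitInterval → G),
    (∀ i, Continuous (f i) ∧ Function.Injective (f i)) ∧
    (⋃ i, Set.range (f i)) = Set.univ ∧
    ∀ i j, i ≠ j →
      Set.range (f i) ∩ Set.range (f j) ⊆ ({f i 0, f i 1} : Set G) ∩ {f j 0, f j 1}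

/-- A subset of a space is a *graph* if it is a finite union of arcs which intersect
at most in endpoints. -/
def IsGraphSet {E : Type*} [TopologicalSpace E] (G : Set E) : Prop :=
  ∃ (n : ℕ) (f : Fin n → unitInterval → E),
    (∀ i, Continuous (f i) ∧ Function.Injective (f i)) ∧
    G = ⋃ i, Set.range (f i) ∧
    ∀ i j, i ≠ j →
      Set.range (f i) ∩ Set.range (f j) ⊆ ({f i 0, f i 1} : Set E) ∩ {f j 0, f j 1}

/-- `φ` restricted to `A` is a homeomorphism onto `B`. -/
def MapsHomeoOnto {F G : Type*} [TopologicalSpace F] [TopologicalSpace G]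
    (φ : F → G) (A : Set F) (B : Set G) : Prop :=
  φ '' A = B ∧ Topology.IsEmbedding (A.restrict φ)

/-- A *simple fold* on `G`, with pieces `F1, F2, F3` of `F` and projection `φ : F → G`,
satisfying properties (F1)-(F5). -/
def IsSimpleFold {F G : Type*} [TopologicalSpace F] [TopologicalSpace G]
    (φ : F → G) (F1 F2 F3 : Set F) : Prop :=
  Continuous φ ∧ F1 ∪ F2 ∪ F3 = Set.univ ∧
  -- (F1)
  ((φ '' F1).Nonempty ∧ (φ '' F2).Nonempty ∧ (φ '' F3).Nonempty) ∧
  (IsRegularSet (φ '' F1) ∧ IsRegularSet (φ '' F2) ∧ IsRegularSet (φ '' F3)) ∧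
  -- (F2)
  (φ '' F1) ∪ (φ '' F3) = Set.univ ∧ (φ '' F2) = (φ '' F1) ∩ (φ '' F3) ∧
  -- (F3)
  closure ((φ '' F1) \ (φ '' F2)) ∩ closure ((φ '' F3) \ (φ '' F2)) = ∅ ∧
  -- (F4)
  (MapsHomeoOnto φ F1 (φ '' F1) ∧ MapsHomeoOnto φ F2 (φ '' F2) ∧
    MapsHomeoOnto φ F3 (φ '' F3)) ∧
  -- (F5)
  frontier (φ '' F1) = φ '' (F1 ∩ F2) ∧ frontier (φ '' F3) = φ '' (F2 ∩ F3) ∧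
  F1 ∩ F3 = ∅

/-- `S` separates `A` from `B` within `Y`: the complement `Y \ S` is the union of two
disjoint sets, relatively open in `Y \ S`, containing `A` and `B` respectively. -/
def SeparatesWithin {E : Type*} [TopologicalSpace E] (Y S A B : Set E) : Prop :=
  ∃ U V : Set E,
    U ∪ V = Y \ S ∧ U ∩ V = ∅ ∧ A ⊆ U ∧ B ⊆ V ∧
    (∃ U', IsOpen U' ∧ U = (Y \ S) ∩ U') ∧ (∃ V', IsOpen V' ∧ V = (Y \ S) ∩ V')

/-- `A` has *consistent complement relative to* `B`: for each component `C` of the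
complement of `A`, either `∂C ⊆ B` or `∂C ∩ B = ∅`. -/
def ConsistentComplement {G : Type*} [TopologicalSpace G] (A B : Set G) : Prop :=
  ∀ x ∉ A, frontier (connectedComponentIn Aᶜ x) ⊆ B ∨
    frontier (connectedComponentIn Aᶜ x) ∩ B = ∅

/-- The *`A` side of `B`*, `σ_B(A)`: the closure of the union of all components of
`G \ B` meeting `A`. -/
def sideOf {G : Type*} [TopologicalSpace G] (B A : Set G) : Set G :=
  closure (⋃ x ∈ {x : G | x ∉ B ∧ (connectedComponentIn Bᶜ x ∩ A).Nonempty},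
    connectedComponentIn Bᶜ x)

/-- A subset of `G × [0,1]` is *straight* if it is closed, the projection is injective on
it, and its projection is regular. -/
def IsStraight {G : Type*} [TopologicalSpace G] (S : Set (G × unitInterval)) : Prop :=
  IsClosed S ∧ Set.InjOn Prod.fst S ∧ IsRegularSet (Prod.fst '' S)

/-- The *end set* of a straight set. -/
def endSet {G : Type*} [TopologicalSpace G] (S : Set (G × unitInterval)) :
    Set (G × unitInterval) :=
  S ∩ Prod.fst ⁻¹' (frontier (Prod.fst '' S))

/-- A *stairwell structure* of height `k` for `S ⊆ G × [0,1]`, given by the pieces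
`Sp 1, …, Sp k` with end set decompositions `E(Sp i) = α i ∪ β i`. -/
def IsStairwell {G : Type*} [TopologicalSpace G]
    (Sp α β : ℕ → Set (G × unitInterval)) (k : ℕ) (S : Set (G × unitInterval)) : Prop :=
  1 ≤ k ∧
  -- (S1)
  (∀ i ∈ Set.Icc 1 k, (Sp i).Nonempty ∧ IsStraight (Sp i)) ∧
  S = ⋃ i ∈ Set.Icc 1 k, Sp i ∧
  -- (S2)
  (∀ i ∈ Set.Icc 1 k, endSet (Sp i) = α i ∪ β i ∧ α i ∩ β i = ∅ ∧
    (α i).Finite ∧ (β i).Finite) ∧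
  α 1 = ∅ ∧ β k = ∅ ∧ (∀ i, 1 ≤ i → i < k → β i = α (i + 1)) ∧
  -- (S3)
  (∀ i, 1 ≤ i → i < k → ∃ V : Set G, IsOpen V ∧ Prod.fst '' β i ⊆ V ∧
    Prod.fst '' Sp i ∩ V = Prod.fst '' Sp (i + 1) ∩ V) ∧
  -- (S4)
  (∀ i ∈ Set.Icc 1 k, ConsistentComplement (Prod.fst '' Sp i) (Prod.fst '' α i) ∧
    ConsistentComplement (Prod.fst '' Sp i) (Prod.fst '' β i)) ∧
  -- (S5)
  (∀ i ∈ Set.Icc 2 k, ∀ p ∈ α i, IsOrdinaryPoint p.1) ∧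
  (∀ i j, 2 ≤ i → i < j → j ≤ k → Prod.fst '' α i ∩ Prod.fst '' α j = ∅)

/-- A *broken stairwell structure* of height `k` with a pit at level `i0`. -/
def IsBrokenStairwell {G : Type*} [TopologicalSpace G]
    (Sp α β : ℕ → Set (G × unitInterval)) (γ P1 P2 : Set (G × unitInterval))
    (k i0 : ℕ) (S : Set (G × unitInterval)) : Prop :=
  1 ≤ k ∧ 1 ≤ i0 ∧ i0 ≤ k ∧
  -- (S1')
  (∀ i ∈ Set.Icc 1 k, (Sp i).Nonempty ∧ IsStraight (Sp i)) ∧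
  P1.Nonempty ∧ IsStraight P1 ∧ P2.Nonempty ∧ IsStraight P2 ∧
  S = (⋃ i ∈ Set.Icc 1 k, Sp i) ∪ P1 ∪ P2 ∧
  -- (S2')
  (∀ i ∈ Set.Icc 1 k, i ≠ i0 → endSet (Sp i) = α i ∪ β i) ∧
  endSet (Sp i0) = α i0 ∪ β i0 ∪ γ ∧
  (∀ i ∈ Set.Icc 1 k, α i ∩ β i = ∅ ∧ (α i).Finite ∧ (β i).Finite) ∧
  γ.Finite ∧ α i0 ∩ γ = ∅ ∧ β i0 ∩ γ = ∅ ∧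
  α 1 = ∅ ∧ β k = ∅ ∧ (∀ i, 1 ≤ i → i < k → β i = α (i + 1)) ∧
  endSet P2 = endSet P1 ∪ γ ∧ endSet P1 ∩ γ = ∅ ∧
  -- (S3')
  (∀ i, 1 ≤ i → i < k → ∃ V : Set G, IsOpen V ∧ Prod.fst '' β i ⊆ V ∧
    Prod.fst '' Sp i ∩ V = Prod.fst '' Sp (i + 1) ∩ V) ∧
  (∃ V : Set G, IsOpen V ∧ Prod.fst '' endSet P1 ⊆ V ∧
    Prod.fst '' P1 ∩ V = Prod.fst '' P2 ∩ V) ∧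
  (∃ W : Set G, IsOpen W ∧ Prod.fst '' γ ⊆ W ∧
    Prod.fst '' P2 ∩ W = Prod.fst '' Sp i0 ∩ W) ∧
  -- (S4')
  (∀ i ∈ Set.Icc 1 k, ConsistentComplement (Prod.fst '' Sp i) (Prod.fst '' α i) ∧
    ConsistentComplement (Prod.fst '' Sp i) (Prod.fst '' β i)) ∧
  ConsistentComplement (Prod.fst '' Sp i0) (Prod.fst '' γ) ∧
  ConsistentComplement (Prod.fst '' P2) (Prod.fst '' endSet P1) ∧
  ConsistentComplement (Prod.fst '' P2) (Prod.fst '' γ) ∧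
  -- (S5')
  (∀ i ∈ Set.Icc 2 k, ∀ p ∈ α i, IsOrdinaryPoint p.1) ∧
  (∀ p ∈ endSet P1, IsOrdinaryPoint p.1) ∧ (∀ p ∈ γ, IsOrdinaryPoint p.1) ∧
  (∀ i j, 2 ≤ i → i < j → j ≤ k → Prod.fst '' α i ∩ Prod.fst '' α j = ∅) ∧
  (∀ i ∈ Set.Icc 2 k, Prod.fst '' α i ∩ Prod.fst '' endSet P1 = ∅ ∧
    Prod.fst '' α i ∩ Prod.fst '' γ = ∅) ∧
  Prod.fst '' endSet P1 ∩ Prod.fst '' γ = ∅ ∧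
  -- (S6')
  Prod.fst '' α i0 ∩ Prod.fst '' (P1 ∪ P2) = ∅

/-- A compactum is *hereditarily indecomposable* if every non-degenerate subcontinuum is
indecomposable, i.e. is not the union of two proper subcontinua. -/
def HereditarilyIndecomposable (X : Type*) [TopologicalSpace X] : Prop :=
  ∀ K : Set X, IsCompact K → IsConnected K → K.Nontrivial →
    ¬ ∃ A B : Set X, IsCompact A ∧ IsConnected A ∧ IsCompact B ∧ IsConnected B ∧
      A ∪ B = K ∧ A ≠ K ∧ B ≠ K

/-- A continuum is *arc-like* if for every `ε > 0` it admits an `ε`-map onto `[0,1]`. -/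
def ArcLike (X : Type*) [MetricSpace X] : Prop :=
  ∀ ε > (0 : ℝ), ∃ f : X → unitInterval, Continuous f ∧ Function.Surjective f ∧
    ∀ y, Metric.diam (f ⁻¹' {y}) < ε

/-- A continuum has *span zero* if every subcontinuum `Z ⊆ X × X` with
`π₁(Z) ⊆ π₂(Z)` meets the diagonal. -/
def SpanZero (X : Type*) [TopologicalSpace X] : Prop :=
  ∀ Z : Set (X × X), IsCompact Z → IsConnected Z →
    Prod.fst '' Z ⊆ Prod.snd '' Z → ∃ x, (x, x) ∈ Z


set_option linter.unusedSectionVars false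
section Helpers


lemma arc_piece {G : Type*} [TopologicalSpace G] [T2Space G]
    (f : unitInterval → G) (hc : Continuous f) (hinj : Function.Injective f)
    {x : G} {W : Set G} (hWopen : IsOpen W) (hxW : x ∈ W) (hx : x ∈ range f) :
    ∃ V O : Set G, IsPreconnected V ∧ x ∈ V ∧ V ⊆ W ∧ IsOpen O ∧ x ∈ O ∧
      O ∩ range f ⊆ V := by
  obtain ⟨p, rfl⟩ := hx
  have hpre : f ⁻¹' W ∈ 𝓝 p := hc.continuousAt.preimage_mem_nhds (hWopen.mem_nhds hxW)
  obtain ⟨δ, hδ, hball⟩ := Metric.mem_nhds_iff.1 hpre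
  set T : Set unitInterval := Subtype.val ⁻¹' (Icc ((p : ℝ) - δ/2) ((p : ℝ) + δ/2)) with hT
  have hTnhds : T ∈ 𝓝 p := by
    apply continuous_subtype_val.continuousAt.preimage_mem_nhds
    exact Icc_mem_nhds (by linarith) (by linarith)
  have hTW : T ⊆ f ⁻¹' W := by
    intro q hq
    apply hball
    rw [Metric.mem_ball, Subtype.dist_eq, Real.dist_eq]
    rcases hq with ⟨h1, h2⟩
    rw [abs_sub_lt_iff]; constructor <;> linarith
  have hTpre : IsPreconnected T := by
    rw [← IsInducing.subtypeVal.isPreconnected_image]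
    have : Subtype.val '' T = Icc ((p : ℝ) - δ/2) ((p : ℝ) + δ/2) ∩ Icc 0 1 := by
      rw [hT, Subtype.image_preimage_coe]
      exact inter_comm _ _
    rw [this, Icc_inter_Icc]
    exact isPreconnected_Icc
  refine ⟨f '' T, (f '' (closure Tᶜ))ᶜ, hTpre.image f hc.continuousOn,
    ⟨p, mem_of_mem_nhds hTnhds, rfl⟩, ?_, ?_, ?_, ?_⟩
  · rintro y ⟨q, hq, rfl⟩; exact hTW hq
  · rw [isOpen_compl_iff]
    exact (((isClosed_closure).isCompact).image hc).isClosed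
  · intro hmem
    obtain ⟨q, hq, hfq⟩ := hmem
    have hqp : q = p := hinj hfq
    subst hqp
    rw [closure_compl] at hq
    exact hq (mem_interior_iff_mem_nhds.2 hTnhds)
  · rintro y ⟨hyO, q, rfl⟩
    refine ⟨q, ?_, rfl⟩
    by_contra hqT
    exact hyO ⟨q, subset_closure hqT, rfl⟩

theorem IsGraphSpace.locallyConnectedSpace {G : Type*} [TopologicalSpace G] [CompactSpace G]
    [T2Space G] (hG : IsGraphSpace G) : LocallyConnectedSpace G := by
  rw [locallyConnectedSpace_iff_connected_subsets]
  intro x U hU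
  classical
  obtain ⟨n, f, hf, hcov, -⟩ := hG
  set W : Set G := interior U ∩ (⋃ j ∈ {j : Fin n | x ∉ range (f j)}, range (f j))ᶜ with hW
  have hWopen : IsOpen W := by
    apply isOpen_interior.inter
    rw [isOpen_compl_iff]
    exact (Set.toFinite _).isClosed_biUnion
      fun j _ => (isCompact_range (hf j).1).isClosed
  have hxW : x ∈ W := by
    refine ⟨mem_interior_iff_mem_nhds.2 hU, ?_⟩
    simp only [mem_compl_iff, mem_iUnion, mem_setOf_eq, not_exists]
    tauto
  choose V O hVpre hxV hVW hOopen hxO hOV using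
    fun j (hj : x ∈ range (f j)) => arc_piece (f j) (hf j).1 (hf j).2 hWopen hxW hj
  set c : Set (Set G) := {s | ∃ j hj, s = V j hj} with hc
  refine ⟨⋃₀ c, ?_, ?_, ?_⟩
  · -- nbhd
    have hxcov : ∃ j, x ∈ range (f j) := by
      have := hcov ▸ mem_univ x
      simpa [mem_iUnion] using this
    obtain ⟨j₀, hj₀⟩ := hxcov
    have hOopen' : IsOpen (W ∩ ⋂ j : Fin n, (if hj : x ∈ range (f j) then O j hj else univ)) := by
      apply hWopen.inter
      apply isOpen_iInter_of_finite
      intro j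
      split
      · exact hOopen _ _
      · exact isOpen_univ
    have hxO' : x ∈ W ∩ ⋂ j : Fin n, (if hj : x ∈ range (f j) then O j hj else univ) := by
      refine ⟨hxW, mem_iInter.2 fun j => ?_⟩
      split
      · exact hxO _ _
      · trivial
    have hsub : (W ∩ ⋂ j : Fin n, (if hj : x ∈ range (f j) then O j hj else univ)) ⊆ ⋃₀ c := by
      intro y hy
      have : ∃ j, y ∈ range (f j) := by
        have := hcov ▸ mem_univ y
        simpa [mem_iUnion] using this
      obtain ⟨j, hyj⟩ := this
      have hxj : x ∈ range (f j) := by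
        by_contra hxj
        exact (hy.1.2 (mem_biUnion (show j ∈ {j : Fin n | x ∉ range (f j)} from hxj) hyj))
      have hyOj : y ∈ O j hxj := by
        have := mem_iInter.1 hy.2 j
        rwa [dif_pos hxj] at this
      exact ⟨V j hxj, ⟨j, hxj, rfl⟩, hOV j hxj ⟨hyOj, hyj⟩⟩
    exact mem_nhds_iff.2 ⟨_, hsub, hOopen', hxO'⟩
  · apply isPreconnected_sUnion x
    · rintro s ⟨j, hj, rfl⟩; exact hxV j hj
    · rintro s ⟨j, hj, rfl⟩; exact hVpre j hj
  · rintro y ⟨s, ⟨j, hj, rfl⟩, hy⟩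
    exact interior_subset (hVW j hj hy).1



section QSide
variable {G : Type*} [TopologicalSpace G] [T2Space G] [ConnectedSpace G]
  [LocallyConnectedSpace G]

def QSide (A Q : Set G) : Set G :=
  {x | x ∉ A ∧ frontier (connectedComponentIn Aᶜ x) ⊆ Q}

lemma frontier_comp_subset {A : Set G} (hA : IsClosed A) {x : G} (hx : x ∉ A) :
    frontier (connectedComponentIn Aᶜ x) ⊆ frontier A := by
  set C := connectedComponentIn Aᶜ x with hC
  have hCo : IsOpen C := hA.isOpen_compl.connectedComponentIn
  have hCsub : C ⊆ Aᶜ := connectedComponentIn_subset _ _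
  intro z hz
  rw [hCo.frontier_eq] at hz
  obtain ⟨hz1, hz2⟩ := hz
  have hzA : z ∈ A := by
    by_contra hzA
    have hE : IsPreconnected (insert z C) := by
      apply IsPreconnected.subset_closure (isPreconnected_connectedComponentIn)
        (subset_insert _ _)
      intro w hw
      rcases hw with rfl | hw
      · exact hz1
      · exact subset_closure hw
    have : insert z C ⊆ C :=
      hE.subset_connectedComponentIn (mem_insert_iff.2 (Or.inr (mem_connectedComponentIn hx)))
        (insert_subset hzA hCsub)
    exact hz2 (this (mem_insert z C))
  constructor
  · exact subset_closure hzA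
  · intro hint
    obtain ⟨w, hw1, hw2⟩ := mem_closure_iff.1 hz1 _ isOpen_interior hint
    exact (hCsub hw2) (interior_subset hw1)

lemma frontier_comp_nonempty {A : Set G} (hA : IsClosed A) (hAne : A.Nonempty) {x : G}
    (hx : x ∉ A) : (frontier (connectedComponentIn Aᶜ x)).Nonempty := by
  set C := connectedComponentIn Aᶜ x with hC
  have hCo : IsOpen C := hA.isOpen_compl.connectedComponentIn
  rw [nonempty_iff_ne_empty]
  intro hfr
  have hclopen : IsClopen C := by
    constructor
    · rw [← closure_eq_iff_isClosed]
      have : closure C = C ∪ frontier C := by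
        rw [hCo.frontier_eq]
        rw [union_diff_self, union_eq_self_of_subset_left subset_closure]
      rw [this, hfr, union_empty]
    · exact hCo
  have : C = univ := hclopen.eq_univ ⟨x, mem_connectedComponentIn hx⟩
  obtain ⟨a, ha⟩ := hAne
  have : a ∈ Aᶜ := connectedComponentIn_subset _ _ (this ▸ mem_univ a)
  exact this ha

lemma comp_dichotomy {A P Q : Set G} (hA : IsClosed A) (hAne : A.Nonempty)
    (hfr : frontier A ⊆ P ∪ Q) (hccP : ConsistentComplement A P)
    (hccQ : ConsistentComplement A Q) {x : G} (hx : x ∉ A) :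
    frontier (connectedComponentIn Aᶜ x) ⊆ P ∨ frontier (connectedComponentIn Aᶜ x) ⊆ Q := by
  rcases hccP x hx with h | h
  · exact Or.inl h
  rcases hccQ x hx with h' | h'
  · exact Or.inr h'
  exfalso
  obtain ⟨z, hz⟩ := frontier_comp_nonempty hA hAne hx
  have hzPQ : z ∈ P ∪ Q := hfr (frontier_comp_subset hA hx hz)
  rcases hzPQ with hzP | hzQ
  · exact absurd (mem_inter hz hzP) (by rw [h]; exact fun a => a)
  · exact absurd (mem_inter hz hzQ) (by rw [h']; exact fun a => a)

lemma qside_open {A Q : Set G} (hA : IsClosed A) : IsOpen (QSide A Q) := by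
  rw [isOpen_iff_forall_mem_open]
  intro x hx
  refine ⟨connectedComponentIn Aᶜ x, ?_, hA.isOpen_compl.connectedComponentIn,
    mem_connectedComponentIn hx.1⟩
  intro z hz
  have hzA : z ∉ A := connectedComponentIn_subset _ _ hz
  have heq := connectedComponentIn_eq hz
  exact ⟨hzA, by rw [← heq]; exact hx.2⟩

lemma qside_subset {A Q : Set G} : QSide A Q ⊆ Aᶜ := fun _ h => h.1

/-- Workhorse: inside a small connected open set `N` around `x ∈ A` meeting the frontier of `A`
only possibly at `x`, every point `y ∈ N \ A` has `x` in the frontier of its component. -/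
lemma workhorse {A : Set G} (hA : IsClosed A) {N : Set G} (hNo : IsOpen N)
    (hNc : IsPreconnected N) {x : G} (hxN : x ∈ N) (hNF : N ∩ frontier A ⊆ {x})
    (hxA : x ∈ A) {y : G} (hyN : y ∈ N) (hyA : y ∉ A) :
    x ∈ frontier (connectedComponentIn Aᶜ y) := by
  have hyx : y ≠ x := fun h => hyA (h ▸ hxA)
  set M : Set G := N \ {x} with hM
  have hMo : IsOpen M := hNo.sdiff isClosed_singleton
  have hyM : y ∈ M := ⟨hyN, hyx⟩
  set D := connectedComponentIn M y with hD
  have hDo : IsOpen D := hMo.connectedComponentIn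
  have hDM : D ⊆ M := connectedComponentIn_subset _ _
  have hyD : y ∈ D := mem_connectedComponentIn hyM
  have hDpre : IsPreconnected D := isPreconnected_connectedComponentIn
  -- D avoids A
  have hDA : D ⊆ Aᶜ := by
    have hsub : D ⊆ (M ∩ Aᶜ) ∪ (M ∩ interior A) := by
      intro z hz
      have hzM := hDM hz
      by_cases hzA : z ∈ A
      · right
        refine ⟨hzM, ?_⟩
        have : z ∉ frontier A := by
          intro hzf
          exact hzM.2 (hNF ⟨hzM.1, hzf⟩)
        rw [hA.frontier_eq, mem_diff] at this
        push_neg at this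
        exact this (hA.closure_eq ▸ hzA)
      · left; exact ⟨hzM, hzA⟩
    have := hDpre.subset_left_of_subset_union (hMo.inter hA.isOpen_compl)
      (hMo.inter isOpen_interior) ?_ hsub ⟨y, hyD, hyM, hyA⟩
    · exact fun z hz => (this hz).2
    · rw [Set.disjoint_iff]
      rintro z ⟨⟨-, hz1⟩, -, hz2⟩
      exact hz1 (interior_subset hz2)
  have hDC : D ⊆ connectedComponentIn Aᶜ y := hDpre.subset_connectedComponentIn hyD hDA
  -- x ∈ closure D
  have hxD : x ∈ closure D := by
    by_contra hxcl
    have hkey : ∀ z ∈ N, z ∈ D ∨ z ∈ (closure D)ᶜ := by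
      intro z hzN
      by_cases hzx : z = x
      · right; rw [hzx]; exact hxcl
      by_cases hzc : z ∈ closure D
      · left
        have hE : IsPreconnected (insert z D) :=
          IsPreconnected.subset_closure hDpre (subset_insert _ _)
            (by
              intro w hw
              rcases hw with rfl | hw
              · exact hzc
              · exact subset_closure hw)
        have : insert z D ⊆ D :=
          hE.subset_connectedComponentIn (mem_insert_iff.2 (Or.inr hyD))
            (insert_subset ⟨hzN, hzx⟩ hDM)
        exact this (mem_insert z D)
      · right; exact hzc
    obtain ⟨z, hzN, hz1, hz2⟩ := hNc D (closure D)ᶜ hDo (isClosed_closure.isOpen_compl)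
      (fun z hz => hkey z hz) ⟨y, hyN, hyD⟩ ⟨x, hxN, hxcl⟩
    exact hz2 (subset_closure hz1)
  have hCo : IsOpen (connectedComponentIn Aᶜ y) := hA.isOpen_compl.connectedComponentIn
  rw [hCo.frontier_eq]
  refine ⟨closure_mono hDC hxD, ?_⟩
  intro hxC
  exact (connectedComponentIn_subset Aᶜ y hxC) hxA

lemma exists_small_nbhd (F : Set G) (hF : F.Finite) {U : Set G} (hUo : IsOpen U) {x : G}
    (hxU : x ∈ U) :
    ∃ N : Set G, IsOpen N ∧ IsPreconnected N ∧ x ∈ N ∧ N ⊆ U ∧ N ∩ F ⊆ {x} := by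
  have hU : IsOpen (U ∩ (F \ {x})ᶜ) := hUo.inter ((hF.subset diff_subset).isClosed).isOpen_compl
  have hxU' : x ∈ U ∩ (F \ {x})ᶜ := ⟨hxU, by simp⟩
  obtain ⟨V, hVU, hVo, hxV, hVc⟩ :=
    locallyConnectedSpace_iff_subsets_isOpen_isConnected.1 ‹LocallyConnectedSpace G› x _
      (hU.mem_nhds hxU')
  refine ⟨V, hVo, hVc.isPreconnected, hxV, fun z hz => (hVU hz).1, ?_⟩
  rintro z ⟨hzV, hzF⟩
  have := (hVU hzV).2
  simp only [mem_compl_iff, mem_diff, not_and, not_not] at this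
  exact this hzF

lemma frontier_qside {A P Q : Set G} (hA : IsClosed A) (hAne : A.Nonempty)
    (hfin : (frontier A).Finite) (hfr : frontier A ⊆ P ∪ Q) (hPQ : P ∩ Q = ∅)
    (hccP : ConsistentComplement A P) (hccQ : ConsistentComplement A Q) :
    frontier (QSide A Q) ⊆ Q := by
  intro x hx
  have hQo : IsOpen (QSide A Q) := qside_open hA
  rw [hQo.frontier_eq] at hx
  obtain ⟨hx1, hx2⟩ := hx
  by_cases hxA : x ∈ A
  · -- use workhorse
    by_contra hxQ
    obtain ⟨N, hNo, hNc, hxN, -, hNF⟩ := exists_small_nbhd (frontier A) hfin isOpen_univ (mem_univ x)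
    obtain ⟨y, hyN, hyQ⟩ := mem_closure_iff.1 hx1 N hNo hxN
    have := workhorse hA hNo hNc hxN hNF hxA hyN hyQ.1
    exact hxQ (hyQ.2 this)
  · -- x outside A but not in QSide: its component is a P-component, open nbhd avoiding QSide
    rcases comp_dichotomy hA hAne hfr hccP hccQ hxA with hP | hQ
    · have hCo : IsOpen (connectedComponentIn Aᶜ x) := hA.isOpen_compl.connectedComponentIn
      have hdisj : connectedComponentIn Aᶜ x ∩ QSide A Q = ∅ := by
        rw [eq_empty_iff_forall_notMem]
        rintro z ⟨hzC, hzQ⟩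
        have heq := connectedComponentIn_eq hzC
        have hfrz : frontier (connectedComponentIn Aᶜ x) ⊆ Q := heq ▸ hzQ.2
        obtain ⟨w, hw⟩ := frontier_comp_nonempty hA hAne hxA
        have : w ∈ P ∩ Q := ⟨hP hw, hfrz hw⟩
        rw [hPQ] at this
        exact this
      obtain ⟨y, hy1, hy2⟩ := mem_closure_iff.1 hx1 _ hCo (mem_connectedComponentIn hxA)
      rw [eq_empty_iff_forall_notMem] at hdisj
      exact absurd ⟨hy1, hy2⟩ (hdisj y)
    · exact absurd ⟨hxA, hQ⟩ hx2

end QSide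


lemma zmod2_cases (z : ZMod 2) : z = 0 ∨ z = 1 := by revert z; decide
lemma zmod2_add_eq_zero {a b : ZMod 2} (h : a + b = 0) : a = b := by revert a b; decide
lemma zmod2_one_ne_zero : (1 : ZMod 2) ≠ 0 := by decide

lemma const_of_locconst {X : Type*} [TopologicalSpace X] [PreconnectedSpace X]
    (g : X → ZMod 2) (h : ∀ x, ∀ᶠ y in 𝓝 x, g y = g x) (x y : X) : g x = g y := by
  have hclopen : IsClopen {y | g y = g x} := by
    constructor
    · rw [← isOpen_compl_iff]
      rw [isOpen_iff_mem_nhds]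
      intro z hz
      filter_upwards [h z] with w hw
      intro hwx
      exact hz (show g z = g x by rw [← hw]; exact hwx)
    · rw [isOpen_iff_mem_nhds]
      intro z hz
      filter_upwards [h z] with w hw
      rw [hw]; exact hz
  have : {y | g y = g x} = univ := hclopen.eq_univ ⟨x, rfl⟩
  have := this ▸ mem_univ y
  exact (this : g y = g x).symm

open Classical in
noncomputable def chi {X : Type*} (s : Set X) (x : X) : ZMod 2 := if x ∈ s then 1 else 0

lemma chi_eventually_const {X : Type*} [TopologicalSpace X] {s : Set X} (hs : IsOpen s)
    {x : X} (hx : x ∉ frontier s) : ∀ᶠ y in 𝓝 x, chi s y = chi s x := by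
  classical
  by_cases hxs : x ∈ s
  · filter_upwards [hs.mem_nhds hxs] with y hy
    simp [chi, hy, hxs]
  · have hxcl : x ∉ closure s := by
      intro hc
      exact hx ⟨hc, by rwa [hs.interior_eq]⟩
    filter_upwards [isClosed_closure.isOpen_compl.mem_nhds hxcl] with y hy
    have : y ∉ s := fun h => hy (subset_closure h)
    simp [chi, this, hxs]

lemma chi_eq_iff {X Y : Type*} {s : Set X} {t : Set Y} {x : X} {y : Y} :
    chi s x = chi t y ↔ (x ∈ s ↔ y ∈ t) := by
  classical
  unfold chi
  split <;> split <;> simp_all <;> decide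

lemma telescope (u : ℕ → ZMod 2) : ∀ k, 1 ≤ k → ∀ v : ℕ → ZMod 2, u 1 = 0 → v k = 0 →
    (∀ i, 1 ≤ i → i < k → v i = u (i + 1)) →
    ∑ i ∈ Finset.Icc 1 k, (u i + v i) = 0 := by
  intro k
  induction k with
  | zero => omega
  | succ n ih =>
    intro _ v hu hv hm
    classical
    rcases Nat.eq_zero_or_pos n with hn | hn
    · subst hn
      simp only [Finset.Icc_self, Finset.sum_singleton]
      rw [hu, hv, add_zero]
    have hsplit : ∑ i ∈ Finset.Icc 1 (n + 1), (u i + v i)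
        = (∑ i ∈ Finset.Icc 1 n, (u i + v i)) + (u (n + 1) + v (n + 1)) :=
      Finset.sum_Icc_succ_top (by omega) _
    have hv' : ∑ i ∈ Finset.Icc 1 n, (u i + (if i = n then 0 else v i)) = 0 := by
      apply ih hn _ hu (by simp)
      intro i h1i hin
      rw [if_neg (by omega)]
      exact hm i h1i (by omega)
    have hcongr : ∑ i ∈ Finset.Icc 1 n, (u i + v i)
        = (∑ i ∈ Finset.Icc 1 n, (u i + (if i = n then 0 else v i)))
          + ∑ i ∈ Finset.Icc 1 n, (if i = n then v n else 0) := by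
      rw [← Finset.sum_add_distrib]
      apply Finset.sum_congr rfl
      intro i hi
      by_cases h : i = n
      · subst h; simp
      · simp [h]
    have hlast : ∑ i ∈ Finset.Icc 1 n, (if i = n then v n else 0) = v n := by
      rw [Finset.sum_ite_eq' (Finset.Icc 1 n) n (fun _ => v n)]
      rw [if_pos (Finset.mem_Icc.2 ⟨hn, le_refl n⟩)]
    have haa : ∀ a : ZMod 2, a + a = 0 := by decide
    rw [hsplit, hcongr, hv', hlast, hv, zero_add, add_zero, hm n hn (by omega)]
    exact haa _

lemma chi_of_mem {X : Type*} {s : Set X} {x : X} (h : x ∈ s) : chi s x = 1 := by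
  simp [chi, h]

lemma chi_of_not_mem {X : Type*} {s : Set X} {x : X} (h : x ∉ s) : chi s x = 0 := by
  simp [chi, h]

lemma zmod2_add_self (a : ZMod 2) : a + a = 0 := by revert a; decide



section Prod
variable {G : Type*} [TopologicalSpace G] [CompactSpace G] [T2Space G]

def upSet (T : Set (G × unitInterval)) : Set (G × unitInterval) :=
  {q | ∃ s, (q.1, s) ∈ T ∧ q.2 ≤ s}

def downSet (T : Set (G × unitInterval)) : Set (G × unitInterval) :=
  {q | ∃ s, (q.1, s) ∈ T ∧ s ≤ q.2}

lemma isClosed_upSet {T : Set (G × unitInterval)} (hT : IsClosed T) : IsClosed (upSet T) := by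
  have hK : IsClosed {z : (G × unitInterval) × unitInterval | z.1 ∈ T ∧ z.2 ≤ z.1.2} := by
    apply (hT.preimage continuous_fst).inter
    exact isClosed_le (by fun_prop) (by fun_prop)
  have hKc : IsCompact {z : (G × unitInterval) × unitInterval | z.1 ∈ T ∧ z.2 ≤ z.1.2} :=
    hK.isCompact
  have him : (fun z : (G × unitInterval) × unitInterval => ((z.1.1, z.2) : G × unitInterval)) ''
      {z | z.1 ∈ T ∧ z.2 ≤ z.1.2} = upSet T := by
    ext ⟨x, t⟩
    constructor
    · rintro ⟨⟨⟨y, s⟩, u⟩, ⟨hmem, hle⟩, heq⟩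
      simp only [Prod.mk.injEq] at heq
      obtain ⟨rfl, rfl⟩ := heq
      exact ⟨s, hmem, hle⟩
    · rintro ⟨s, hs, hle⟩
      exact ⟨((x, s), t), ⟨hs, hle⟩, rfl⟩
  rw [← him]
  exact (hKc.image (by fun_prop)).isClosed

lemma isClosed_downSet {T : Set (G × unitInterval)} (hT : IsClosed T) : IsClosed (downSet T) := by
  have hK : IsClosed {z : (G × unitInterval) × unitInterval | z.1 ∈ T ∧ z.1.2 ≤ z.2} := by
    apply (hT.preimage continuous_fst).inter
    exact isClosed_le (by fun_prop) (by fun_prop)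
  have him : (fun z : (G × unitInterval) × unitInterval => ((z.1.1, z.2) : G × unitInterval)) ''
      {z | z.1 ∈ T ∧ z.1.2 ≤ z.2} = downSet T := by
    ext ⟨x, t⟩
    constructor
    · rintro ⟨⟨⟨y, s⟩, u⟩, ⟨hmem, hle⟩, heq⟩
      simp only [Prod.mk.injEq] at heq
      obtain ⟨rfl, rfl⟩ := heq
      exact ⟨s, hmem, hle⟩
    · rintro ⟨s, hs, hle⟩
      exact ⟨((x, s), t), ⟨hs, hle⟩, rfl⟩
  rw [← him]
  exact (hK.isCompact.image (by fun_prop)).isClosed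

end Prod

end Helpers

/-- a set with a stairwell structure of odd height separates G × {0} from G × {1}. -/
theorem stmt11 (G : Type*) [TopologicalSpace G] [CompactSpace G] [T2Space G]
    [ConnectedSpace G] (hG : IsGraphSpace G)
    (S : Set (G × unitInterval)) (hsub : ∀ p ∈ S, p.2 ≠ 0 ∧ p.2 ≠ 1)
    (k : ℕ) (hodd : Odd k)
    (h : ∃ Sp α β : ℕ → Set (G × unitInterval), IsStairwell Sp α β k S) :
    SeparatesWithin Set.univ S
      (Set.univ ×ˢ ({0} : Set unitInterval)) (Set.univ ×ˢ ({1} : Set unitInterval)) := by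
  classical
  obtain ⟨Sp, α, β, hst⟩ := h
  obtain ⟨hk1, hS1, hSeq, hS2, hα1, hβk, hβα, hS3, hS4, -, hgen⟩ := hst
  haveI : LocallyConnectedSpace G := hG.locallyConnectedSpace
  -- ===== basic facts about the pieces =====
  have hSpclosed : ∀ i ∈ Set.Icc 1 k, IsClosed (Sp i) := fun i hi => (hS1 i hi).2.1
  have hSpinj : ∀ i ∈ Set.Icc 1 k, Set.InjOn Prod.fst (Sp i) := fun i hi => (hS1 i hi).2.2.1
  have hSpS : ∀ i ∈ Set.Icc 1 k, Sp i ⊆ S := fun i hi => hSeq ▸ subset_biUnion_of_mem hi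
  have hAne : ∀ i ∈ Set.Icc 1 k, (Prod.fst '' Sp i).Nonempty :=
    fun i hi => ((hS1 i hi).1).image _
  have hAcl : ∀ i ∈ Set.Icc 1 k, IsClosed (Prod.fst '' Sp i) :=
    fun i hi => (((hSpclosed i hi).isCompact).image continuous_fst).isClosed
  have hβsub : ∀ i ∈ Set.Icc 1 k, β i ⊆ Sp i := by
    intro i hi p hp
    have h2 := (hS2 i hi).1
    have : p ∈ endSet (Sp i) := h2 ▸ Or.inr hp
    exact this.1
  have hαsub : ∀ i ∈ Set.Icc 1 k, α i ⊆ Sp i := by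
    intro i hi p hp
    have h2 := (hS2 i hi).1
    have : p ∈ endSet (Sp i) := h2 ▸ Or.inl hp
    exact this.1
  have hfrA : ∀ i ∈ Set.Icc 1 k,
      frontier (Prod.fst '' Sp i) = Prod.fst '' α i ∪ Prod.fst '' β i := by
    intro i hi
    have h1 : Prod.fst '' endSet (Sp i) = frontier (Prod.fst '' Sp i) := by
      unfold endSet
      rw [Set.image_inter_preimage]
      exact inter_eq_right.2 ((hAcl i hi).frontier_subset)
    rw [← h1, (hS2 i hi).1, Set.image_union]
  have hfrfin : ∀ i ∈ Set.Icc 1 k, (frontier (Prod.fst '' Sp i)).Finite := by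
    intro i hi
    rw [hfrA i hi]
    exact (((hS2 i hi).2.2.1).image _).union (((hS2 i hi).2.2.2).image _)
  have hpbpa : ∀ i, 1 ≤ i → i < k → Prod.fst '' β i = Prod.fst '' α (i + 1) :=
    fun i h1 h2 => by rw [hβα i h1 h2]
  have hpa1 : Prod.fst '' α 1 = (∅ : Set G) := by rw [hα1, Set.image_empty]
  have hpbk : Prod.fst '' β k = (∅ : Set G) := by rw [hβk, Set.image_empty]
  have hdisj : ∀ i ∈ Set.Icc 1 k, Prod.fst '' α i ∩ Prod.fst '' β i = ∅ := by
    intro i hi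
    rcases Set.mem_Icc.1 hi with ⟨hi1, hik⟩
    rcases eq_or_lt_of_le hik with rfl | hik'
    · rw [hpbk, Set.inter_empty]
    rcases eq_or_lt_of_le hi1 with h1 | hi2
    · rw [← h1, hpa1, Set.empty_inter]
    · rw [hpbpa i hi1 hik']
      exact hgen i (i+1) hi2 (Nat.lt_succ_self i) (by omega)
  -- ===== bottom parity =====
  have hQa1 : QSide (Prod.fst '' Sp 1) (Prod.fst '' α 1) = ∅ := by
    rw [eq_empty_iff_forall_notMem]
    rintro x ⟨hx1, hx2⟩
    have h1k : (1 : ℕ) ∈ Set.Icc 1 k := Set.mem_Icc.2 ⟨le_refl 1, hk1⟩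
    obtain ⟨z, hz⟩ := frontier_comp_nonempty (hAcl 1 h1k) (hAne 1 h1k) hx1
    rw [hpa1] at hx2
    exact hx2 hz
  have hQbk : QSide (Prod.fst '' Sp k) (Prod.fst '' β k) = ∅ := by
    rw [eq_empty_iff_forall_notMem]
    rintro x ⟨hx1, hx2⟩
    have hkk : k ∈ Set.Icc 1 k := Set.mem_Icc.2 ⟨hk1, le_refl k⟩
    obtain ⟨z, hz⟩ := frontier_comp_nonempty (hAcl k hkk) (hAne k hkk) hx1
    rw [hpbk] at hx2
    exact hx2 hz
  have hpointwise : ∀ i ∈ Set.Icc 1 k, ∀ x : G,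
      chi (Prod.fst '' Sp i) x =
        1 + (chi (QSide (Prod.fst '' Sp i) (Prod.fst '' α i)) x
          + chi (QSide (Prod.fst '' Sp i) (Prod.fst '' β i)) x) := by
    intro i hi x
    by_cases hxA : x ∈ Prod.fst '' Sp i
    · rw [chi_of_mem hxA, chi_of_not_mem (show x ∉ QSide (Prod.fst '' Sp i) (Prod.fst '' α i) from fun hm => hm.1 hxA),
        chi_of_not_mem (show x ∉ QSide (Prod.fst '' Sp i) (Prod.fst '' β i) from fun hm => hm.1 hxA)]
      decide
    · have hne := frontier_comp_nonempty (hAcl i hi) (hAne i hi) hxA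
      rcases comp_dichotomy (hAcl i hi) (hAne i hi) (le_of_eq (hfrA i hi))
        ((hS4 i hi).1) ((hS4 i hi).2) hxA with hP | hQ
      · have h3 : x ∉ QSide (Prod.fst '' Sp i) (Prod.fst '' β i) := by
          rintro ⟨-, hQ'⟩
          obtain ⟨z, hz⟩ := hne
          have hzz : z ∈ Prod.fst '' α i ∩ Prod.fst '' β i := ⟨hP hz, hQ' hz⟩
          rw [hdisj i hi] at hzz
          exact hzz
        rw [chi_of_not_mem hxA, chi_of_mem (show x ∈ QSide (Prod.fst '' Sp i) (Prod.fst '' α i) from ⟨hxA, hP⟩), chi_of_not_mem h3]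
        decide
      · have h2 : x ∉ QSide (Prod.fst '' Sp i) (Prod.fst '' α i) := by
          rintro ⟨-, hP'⟩
          obtain ⟨z, hz⟩ := hne
          have hzz : z ∈ Prod.fst '' α i ∩ Prod.fst '' β i := ⟨hP' hz, hQ hz⟩
          rw [hdisj i hi] at hzz
          exact hzz
        rw [chi_of_not_mem hxA, chi_of_not_mem h2, chi_of_mem (show x ∈ QSide (Prod.fst '' Sp i) (Prod.fst '' β i) from ⟨hxA, hQ⟩)]
        decide
  have hjoin : ∀ i, 1 ≤ i → i < k →
      QSide (Prod.fst '' Sp i) (Prod.fst '' β i)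
        = QSide (Prod.fst '' Sp (i+1)) (Prod.fst '' α (i+1)) := by
    intro i hi1 hik
    have hiI : i ∈ Set.Icc 1 k := Set.mem_Icc.2 ⟨hi1, le_of_lt hik⟩
    have hi1I : i + 1 ∈ Set.Icc 1 k := Set.mem_Icc.2 ⟨by omega, hik⟩
    rcases Set.eq_empty_or_nonempty (Prod.fst '' β i) with hemp | hne
    · have e1 : QSide (Prod.fst '' Sp i) (Prod.fst '' β i) = ∅ := by
        rw [eq_empty_iff_forall_notMem]
        rintro x ⟨hx1, hx2⟩
        obtain ⟨z, hz⟩ := frontier_comp_nonempty (hAcl i hiI) (hAne i hiI) hx1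
        rw [hemp] at hx2; exact hx2 hz
      have e2 : QSide (Prod.fst '' Sp (i+1)) (Prod.fst '' α (i+1)) = ∅ := by
        rw [eq_empty_iff_forall_notMem]
        rintro x ⟨hx1, hx2⟩
        obtain ⟨z, hz⟩ := frontier_comp_nonempty (hAcl _ hi1I) (hAne _ hi1I) hx1
        rw [← hpbpa i hi1 hik, hemp] at hx2; exact hx2 hz
      rw [e1, e2]
    obtain ⟨x0, hx0⟩ := hne
    obtain ⟨V, hVo, hbV, hAV⟩ := hS3 i hi1 hik
    have hQ1o : IsOpen (QSide (Prod.fst '' Sp i) (Prod.fst '' β i)) := qside_open (hAcl i hiI)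
    have hQ2o : IsOpen (QSide (Prod.fst '' Sp (i+1)) (Prod.fst '' α (i+1))) :=
      qside_open (hAcl _ hi1I)
    have hfr1 : frontier (QSide (Prod.fst '' Sp i) (Prod.fst '' β i)) ⊆ Prod.fst '' β i :=
      frontier_qside (hAcl i hiI) (hAne i hiI) (hfrfin i hiI) (le_of_eq (hfrA i hiI))
        (hdisj i hiI) ((hS4 i hiI).1) ((hS4 i hiI).2)
    have hfr2 : frontier (QSide (Prod.fst '' Sp (i+1)) (Prod.fst '' α (i+1)))
        ⊆ Prod.fst '' α (i+1) :=
      frontier_qside (hAcl _ hi1I) (hAne _ hi1I) (hfrfin _ hi1I)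
        (by rw [hfrA _ hi1I]; exact (Set.union_comm _ _).le)
        (by rw [Set.inter_comm]; exact hdisj _ hi1I) ((hS4 _ hi1I).2) ((hS4 _ hi1I).1)
    have hloc : ∀ x : G, ∀ᶠ y in 𝓝 x,
        chi (QSide (Prod.fst '' Sp i) (Prod.fst '' β i)) y
          + chi (QSide (Prod.fst '' Sp (i+1)) (Prod.fst '' α (i+1))) y
        = chi (QSide (Prod.fst '' Sp i) (Prod.fst '' β i)) x
          + chi (QSide (Prod.fst '' Sp (i+1)) (Prod.fst '' α (i+1))) x := by
      intro x
      by_cases hxpb : x ∈ Prod.fst '' β i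
      · -- join point
        obtain ⟨qp, hqp, hqpx⟩ := hxpb
        have hq0i : ((x, qp.2) : G × unitInterval) ∈ Sp i := by
          rw [← hqpx, Prod.mk.eta]; exact hβsub i hiI hqp
        have hq0i1 : ((x, qp.2) : G × unitInterval) ∈ Sp (i+1) := by
          rw [← hqpx, Prod.mk.eta]; exact hαsub _ hi1I ((hβα i hi1 hik) ▸ hqp)
        have hxAi : x ∈ Prod.fst '' Sp i := ⟨(x, qp.2), hq0i, rfl⟩
        have hxAi1 : x ∈ Prod.fst '' Sp (i+1) := ⟨(x, qp.2), hq0i1, rfl⟩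
        have hxpb' : x ∈ Prod.fst '' β i := ⟨qp, hqp, hqpx⟩
        have hFfin : ((frontier (Prod.fst '' Sp i) ∪ frontier (Prod.fst '' Sp (i+1)))
            : Set G).Finite := (hfrfin i hiI).union (hfrfin _ hi1I)
        obtain ⟨N, hNo, hNc, hxN, hNV, hNF⟩ := exists_small_nbhd _ hFfin hVo (hbV hxpb')
        have hkey : ∀ y ∈ N,
            chi (QSide (Prod.fst '' Sp i) (Prod.fst '' β i)) y
              + chi (QSide (Prod.fst '' Sp (i+1)) (Prod.fst '' α (i+1))) y = 0 := by
          intro y hyN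
          by_cases hyA : y ∈ Prod.fst '' Sp i
          · have hyA1 : y ∈ Prod.fst '' Sp (i+1) := by
              have hy' : y ∈ Prod.fst '' Sp i ∩ V := ⟨hyA, hNV hyN⟩
              rw [hAV] at hy'; exact hy'.1
            rw [chi_of_not_mem (show y ∉ QSide (Prod.fst '' Sp i) (Prod.fst '' β i) from
                fun hm => hm.1 hyA),
              chi_of_not_mem (show y ∉ QSide (Prod.fst '' Sp (i+1)) (Prod.fst '' α (i+1)) from
                fun hm => hm.1 hyA1), add_zero]
          · have hyA1 : y ∉ Prod.fst '' Sp (i+1) := by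
              intro hy1
              have hy' : y ∈ Prod.fst '' Sp (i+1) ∩ V := ⟨hy1, hNV hyN⟩
              rw [← hAV] at hy'; exact hyA hy'.1
            have w1 := workhorse (hAcl i hiI) hNo hNc hxN
              (fun z hz => hNF ⟨hz.1, Or.inl hz.2⟩) hxAi hyN hyA
            have w2 := workhorse (hAcl _ hi1I) hNo hNc hxN
              (fun z hz => hNF ⟨hz.1, Or.inr hz.2⟩) hxAi1 hyN hyA1
            have hy1 : y ∈ QSide (Prod.fst '' Sp i) (Prod.fst '' β i) := by
              refine ⟨hyA, ?_⟩
              rcases (hS4 i hiI).2 y hyA with hsub' | hdis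
              · exact hsub'
              · exfalso
                rw [eq_empty_iff_forall_notMem] at hdis
                exact hdis x ⟨w1, hxpb'⟩
            have hy2 : y ∈ QSide (Prod.fst '' Sp (i+1)) (Prod.fst '' α (i+1)) := by
              refine ⟨hyA1, ?_⟩
              rcases (hS4 _ hi1I).1 y hyA1 with hsub' | hdis
              · exact hsub'
              · exfalso
                rw [eq_empty_iff_forall_notMem] at hdis
                exact hdis x ⟨w2, (hpbpa i hi1 hik) ▸ hxpb'⟩
            rw [chi_of_mem hy1, chi_of_mem hy2]
            decide
        filter_upwards [hNo.mem_nhds hxN] with y hy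
        rw [hkey y hy, hkey x hxN]
      · have h1 := chi_eventually_const hQ1o (fun hc => hxpb (hfr1 hc))
        have h2 := chi_eventually_const hQ2o
          (fun hc => hxpb (by rw [hpbpa i hi1 hik]; exact hfr2 hc))
        filter_upwards [h1, h2] with y hy1 hy2
        rw [hy1, hy2]
    ext y
    have hgc := const_of_locconst
      (fun x => chi (QSide (Prod.fst '' Sp i) (Prod.fst '' β i)) x
        + chi (QSide (Prod.fst '' Sp (i+1)) (Prod.fst '' α (i+1))) x) hloc y x0
    have hx00 : chi (QSide (Prod.fst '' Sp i) (Prod.fst '' β i)) x0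
        + chi (QSide (Prod.fst '' Sp (i+1)) (Prod.fst '' α (i+1))) x0 = 0 := by
      obtain ⟨qp, hqp, hqpx⟩ := hx0
      have hx0A : x0 ∈ Prod.fst '' Sp i := ⟨qp, hβsub i hiI hqp, hqpx⟩
      have hx0A1 : x0 ∈ Prod.fst '' Sp (i+1) :=
        ⟨qp, hαsub _ hi1I ((hβα i hi1 hik) ▸ hqp), hqpx⟩
      rw [chi_of_not_mem (show x0 ∉ QSide (Prod.fst '' Sp i) (Prod.fst '' β i) from
          fun hm => hm.1 hx0A),
        chi_of_not_mem (show x0 ∉ QSide (Prod.fst '' Sp (i+1)) (Prod.fst '' α (i+1)) from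
          fun hm => hm.1 hx0A1), add_zero]
    have hy0 : chi (QSide (Prod.fst '' Sp i) (Prod.fst '' β i)) y
        + chi (QSide (Prod.fst '' Sp (i+1)) (Prod.fst '' α (i+1))) y = 0 := by
      rw [hgc]; exact hx00
    exact chi_eq_iff.1 (zmod2_add_eq_zero hy0)
  have hbottom : ∀ x : G, ∑ i ∈ Finset.Icc 1 k, chi (Prod.fst '' Sp i) x = 1 := by
    intro x
    have hmemI : ∀ i ∈ Finset.Icc 1 k, i ∈ Set.Icc 1 k := by
      intro i hi; rw [Finset.mem_Icc] at hi; exact Set.mem_Icc.2 hi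
    have hsum1 : ∑ i ∈ Finset.Icc 1 k, chi (Prod.fst '' Sp i) x
        = ∑ i ∈ Finset.Icc 1 k, ((1 : ZMod 2) + (chi (QSide (Prod.fst '' Sp i) (Prod.fst '' α i)) x
            + chi (QSide (Prod.fst '' Sp i) (Prod.fst '' β i)) x)) := by
      apply Finset.sum_congr rfl
      intro i hi
      exact hpointwise i (hmemI i hi) x
    have htel : ∑ i ∈ Finset.Icc 1 k, ((chi (QSide (Prod.fst '' Sp i) (Prod.fst '' α i)) x)
        + chi (QSide (Prod.fst '' Sp i) (Prod.fst '' β i)) x) = 0 := by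
      apply telescope (fun i => chi (QSide (Prod.fst '' Sp i) (Prod.fst '' α i)) x) k hk1
        (fun i => chi (QSide (Prod.fst '' Sp i) (Prod.fst '' β i)) x)
      · rw [hQa1]; exact chi_of_not_mem (notMem_empty x)
      · rw [hQbk]; exact chi_of_not_mem (notMem_empty x)
      · intro i h1 h2
        rw [hjoin i h1 h2]
    rw [hsum1, Finset.sum_add_distrib, htel, add_zero, Finset.sum_const, Nat.card_Icc]
    obtain ⟨m, hm⟩ := hodd
    rw [show k + 1 - 1 = k from by omega, hm]
    rw [nsmul_eq_mul, mul_one]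
    push_cast
    rw [show ((2 : ZMod 2)) = 0 from by decide]
    ring
  -- ===== product-space side =====
  have hScl : IsClosed S := by
    rw [hSeq]
    exact (Set.finite_Icc 1 k).isClosed_biUnion (fun i hi => hSpclosed i hi)
  have hup_cl : ∀ i ∈ Set.Icc 1 k, IsClosed (upSet (Sp i)) :=
    fun i hi => isClosed_upSet (hSpclosed i hi)
  have hdown_cl : ∀ i ∈ Set.Icc 1 k, IsClosed (downSet (Sp i)) :=
    fun i hi => isClosed_downSet (hSpclosed i hi)
  have hSp_up : ∀ i, Sp i ⊆ upSet (Sp i) := by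
    intro i q hq; exact ⟨q.2, by rwa [Prod.mk.eta], le_refl _⟩
  have hSp_down : ∀ i, Sp i ⊆ downSet (Sp i) := by
    intro i q hq; exact ⟨q.2, by rwa [Prod.mk.eta], le_refl _⟩
  have hupA : ∀ i, ∀ q : G × unitInterval, q ∈ upSet (Sp i) → q.1 ∈ Prod.fst '' Sp i := by
    rintro i q ⟨s, hs, -⟩; exact ⟨(q.1, s), hs, rfl⟩
  have hud_inter : ∀ i ∈ Set.Icc 1 k, upSet (Sp i) ∩ downSet (Sp i) = Sp i := by
    intro i hi
    ext q
    constructor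
    · rintro ⟨⟨s1, hs1, hle1⟩, ⟨s2, hs2, hle2⟩⟩
      have hss : s1 = s2 := congrArg Prod.snd (hSpinj i hi hs1 hs2 rfl)
      have hq2 : q.2 = s1 := le_antisymm hle1 (by rw [hss]; exact hle2)
      have hqe : q = (q.1, s1) := by rw [← hq2, Prod.mk.eta]
      rw [hqe]; exact hs1
    · intro hq; exact ⟨hSp_up i hq, hSp_down i hq⟩
  have hud_union : ∀ i, ∀ q : G × unitInterval, q.1 ∈ Prod.fst '' Sp i →
      q ∈ upSet (Sp i) ∪ downSet (Sp i) := by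
    intro i q hq
    obtain ⟨p, hp, hpx⟩ := hq
    have hp' : ((q.1, p.2) : G × unitInterval) ∈ Sp i := by
      rw [← hpx, Prod.mk.eta]; exact hp
    rcases le_total q.2 p.2 with hle | hle
    · exact Or.inl ⟨p.2, hp', hle⟩
    · exact Or.inr ⟨p.2, hp', hle⟩
  -- per-piece local constancy
  have hpiece : ∀ i ∈ Set.Icc 1 k, ∀ q : G × unitInterval, q ∉ Sp i →
      q.1 ∉ frontier (Prod.fst '' Sp i) →
      ∀ᶠ r in 𝓝 q, chi (upSet (Sp i) \ Sp i) r = chi (upSet (Sp i) \ Sp i) q := by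
    intro i hi q hqSp hqfr
    by_cases hqA : q.1 ∈ Prod.fst '' Sp i
    · have hint : q.1 ∈ interior (Prod.fst '' Sp i) := by
        by_contra hint
        exact hqfr ((hAcl i hi).frontier_eq ▸ ⟨hqA, hint⟩)
      by_cases hqU : q ∈ upSet (Sp i)
      · have hqD : q ∉ downSet (Sp i) := fun hd => hqSp ((hud_inter i hi) ▸ ⟨hqU, hd⟩)
        have hO : IsOpen ((Prod.fst ⁻¹' interior (Prod.fst '' Sp i))
            ∩ (downSet (Sp i))ᶜ) :=
          (isOpen_interior.preimage continuous_fst).inter (hdown_cl i hi).isOpen_compl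
        filter_upwards [hO.mem_nhds ⟨hint, hqD⟩] with r hr
        have hrB : r ∈ upSet (Sp i) \ Sp i := by
          rcases hud_union i r (interior_subset hr.1) with hh | hh
          · exact ⟨hh, fun hrSp => hr.2 (hSp_down i hrSp)⟩
          · exact absurd hh hr.2
        rw [chi_of_mem hrB, chi_of_mem (show q ∈ upSet (Sp i) \ Sp i from ⟨hqU, hqSp⟩)]
      · filter_upwards [(hup_cl i hi).isOpen_compl.mem_nhds hqU] with r hr
        rw [chi_of_not_mem (show r ∉ upSet (Sp i) \ Sp i from fun hm => hr hm.1),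
          chi_of_not_mem (show q ∉ upSet (Sp i) \ Sp i from fun hm => hqU hm.1)]
    · have hO : IsOpen ((Prod.fst ⁻¹' (Prod.fst '' Sp i)ᶜ) : Set (G × unitInterval)) :=
        ((hAcl i hi).isOpen_compl).preimage continuous_fst
      filter_upwards [hO.mem_nhds hqA] with r hr
      rw [chi_of_not_mem (show r ∉ upSet (Sp i) \ Sp i from fun hm => hr (hupA i r hm.1)),
        chi_of_not_mem (show q ∉ upSet (Sp i) \ Sp i from fun hm => hqA (hupA i q hm.1))]
  -- join-pair local constancy
  have hpair : ∀ i, 1 ≤ i → i < k → ∀ q : G × unitInterval, q ∉ Sp i → q ∉ Sp (i+1) →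
      q.1 ∈ Prod.fst '' β i →
      ∀ᶠ r in 𝓝 q, chi (upSet (Sp i) \ Sp i) r + chi (upSet (Sp (i+1)) \ Sp (i+1)) r
        = chi (upSet (Sp i) \ Sp i) q + chi (upSet (Sp (i+1)) \ Sp (i+1)) q := by
    intro i hi1 hik q hqi hqi1 hqpb
    have hiI : i ∈ Set.Icc 1 k := Set.mem_Icc.2 ⟨hi1, le_of_lt hik⟩
    have hi1I : i + 1 ∈ Set.Icc 1 k := Set.mem_Icc.2 ⟨by omega, hik⟩
    obtain ⟨qp, hqp, hqpx⟩ := hqpb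
    have hq0i : ((q.1, qp.2) : G × unitInterval) ∈ Sp i := by
      rw [← hqpx, Prod.mk.eta]; exact hβsub i hiI hqp
    have hq0i1 : ((q.1, qp.2) : G × unitInterval) ∈ Sp (i+1) := by
      rw [← hqpx, Prod.mk.eta]; exact hαsub _ hi1I ((hβα i hi1 hik) ▸ hqp)
    have htne : q.2 ≠ qp.2 := by
      intro he
      apply hqi
      have hqe : q = (q.1, qp.2) := by rw [← he, Prod.mk.eta]
      rw [hqe]; exact hq0i
    obtain ⟨V, hVo, hbV, hAV⟩ := hS3 i hi1 hik
    have hqV : q.1 ∈ V := hbV ⟨qp, hqp, hqpx⟩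
    rcases lt_or_gt_of_ne htne with hlt | hgt
    · -- strictly below the join height
      have hWo : IsOpen ((Prod.fst ⁻¹' V) ∩ (downSet (Sp i))ᶜ ∩ (downSet (Sp (i+1)))ᶜ) :=
        ((hVo.preimage continuous_fst).inter (hdown_cl i hiI).isOpen_compl).inter
          (hdown_cl _ hi1I).isOpen_compl
      have hqW : q ∈ (Prod.fst ⁻¹' V) ∩ (downSet (Sp i))ᶜ ∩ (downSet (Sp (i+1)))ᶜ := by
        refine ⟨⟨hqV, ?_⟩, ?_⟩
        · rintro ⟨s, hs, hle⟩
          have hs2 : s = qp.2 := congrArg Prod.snd (hSpinj i hiI hs hq0i rfl)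
          rw [hs2] at hle
          exact absurd hle (not_le.2 hlt)
        · rintro ⟨s, hs, hle⟩
          have hs2 : s = qp.2 := congrArg Prod.snd (hSpinj _ hi1I hs hq0i1 rfl)
          rw [hs2] at hle
          exact absurd hle (not_le.2 hlt)
      have hWeq : ∀ r ∈ (Prod.fst ⁻¹' V) ∩ (downSet (Sp i))ᶜ ∩ (downSet (Sp (i+1)))ᶜ,
          (r ∈ upSet (Sp i) \ Sp i ↔ r ∈ upSet (Sp (i+1)) \ Sp (i+1)) := by
        rintro r ⟨⟨hrV, hrd1⟩, hrd2⟩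
        constructor
        · intro hrB
          have hrA : r.1 ∈ Prod.fst '' Sp (i+1) := by
            have h1 : r.1 ∈ Prod.fst '' Sp i ∩ V := ⟨hupA i r hrB.1, hrV⟩
            rw [hAV] at h1; exact h1.1
          rcases hud_union _ r hrA with hh | hh
          · exact ⟨hh, fun hrSp => hrd2 (hSp_down _ hrSp)⟩
          · exact absurd hh hrd2
        · intro hrB
          have hrA : r.1 ∈ Prod.fst '' Sp i := by
            have h1 : r.1 ∈ Prod.fst '' Sp (i+1) ∩ V := ⟨hupA _ r hrB.1, hrV⟩
            rw [← hAV] at h1; exact h1.1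
          rcases hud_union _ r hrA with hh | hh
          · exact ⟨hh, fun hrSp => hrd1 (hSp_down _ hrSp)⟩
          · exact absurd hh hrd1
      filter_upwards [hWo.mem_nhds hqW] with r hr
      rw [chi_eq_iff.2 (hWeq r hr), chi_eq_iff.2 (hWeq q hqW),
        zmod2_add_self, zmod2_add_self]
    · -- strictly above the join height
      have hWo : IsOpen ((Prod.fst ⁻¹' V) ∩ (upSet (Sp i))ᶜ ∩ (upSet (Sp (i+1)))ᶜ) :=
        ((hVo.preimage continuous_fst).inter (hup_cl i hiI).isOpen_compl).inter
          (hup_cl _ hi1I).isOpen_compl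
      have hqW : q ∈ (Prod.fst ⁻¹' V) ∩ (upSet (Sp i))ᶜ ∩ (upSet (Sp (i+1)))ᶜ := by
        refine ⟨⟨hqV, ?_⟩, ?_⟩
        · rintro ⟨s, hs, hle⟩
          have hs2 : s = qp.2 := congrArg Prod.snd (hSpinj i hiI hs hq0i rfl)
          rw [hs2] at hle
          exact absurd hle (not_le.2 hgt)
        · rintro ⟨s, hs, hle⟩
          have hs2 : s = qp.2 := congrArg Prod.snd (hSpinj _ hi1I hs hq0i1 rfl)
          rw [hs2] at hle
          exact absurd hle (not_le.2 hgt)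
      filter_upwards [hWo.mem_nhds hqW] with r hr
      rw [chi_of_not_mem (show r ∉ upSet (Sp i) \ Sp i from fun hm => hr.1.2 hm.1),
        chi_of_not_mem (show r ∉ upSet (Sp (i+1)) \ Sp (i+1) from fun hm => hr.2 hm.1),
        chi_of_not_mem (show q ∉ upSet (Sp i) \ Sp i from fun hm => hqW.1.2 hm.1),
        chi_of_not_mem (show q ∉ upSet (Sp (i+1)) \ Sp (i+1) from fun hm => hqW.2 hm.1)]
  -- the parity function
  set P : G × unitInterval → ZMod 2 :=
    fun q => ∑ i ∈ Finset.Icc 1 k, chi (upSet (Sp i) \ Sp i) q with hPdef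
  have hnotS : ∀ q : G × unitInterval, q ∉ S → ∀ i ∈ Set.Icc 1 k, q ∉ Sp i :=
    fun q hq i hi hqi => hq (hSpS i hi hqi)
  have hloc : ∀ q ∉ S, ∀ᶠ r in 𝓝 q, P r = P q := by
    intro q hqS
    by_cases hfr : ∃ m ∈ Set.Icc 1 k, q.1 ∈ frontier (Prod.fst '' Sp m)
    · obtain ⟨m, hmI, hmfr⟩ := hfr
      rw [hfrA m hmI] at hmfr
      have hi'ex : ∃ i', 1 ≤ i' ∧ i' < k ∧ q.1 ∈ Prod.fst '' β i' := by
        rcases hmfr with hpa' | hpb'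
        · rcases Set.mem_Icc.1 hmI with ⟨hm1, hmk⟩
          have hm2 : 2 ≤ m := by
            by_contra h2
            have hm1' : m = 1 := by omega
            rw [hm1', hpa1] at hpa'
            exact notMem_empty _ hpa'
          refine ⟨m - 1, by omega, by omega, ?_⟩
          rw [hpbpa (m-1) (by omega) (by omega), show m - 1 + 1 = m from by omega]
          exact hpa'
        · have hmk' : m < k := by
            rcases eq_or_lt_of_le (Set.mem_Icc.1 hmI).2 with h | h
            · exfalso; rw [h, hpbk] at hpb'; exact notMem_empty _ hpb'
            · exact h
          exact ⟨m, (Set.mem_Icc.1 hmI).1, hmk', hpb'⟩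
      obtain ⟨i', hi'1, hi'k, hi'pb⟩ := hi'ex
      have hq1pa : q.1 ∈ Prod.fst '' α (i'+1) := by
        rw [← hpbpa i' hi'1 hi'k]; exact hi'pb
      have huniq : ∀ j ∈ Set.Icc 1 k, j ≠ i' → j ≠ i' + 1 →
          q.1 ∉ frontier (Prod.fst '' Sp j) := by
        intro j hjI hj1 hj2 hjf
        obtain ⟨hjge, hjle⟩ := Set.mem_Icc.1 hjI
        rw [hfrA j hjI] at hjf
        rcases hjf with hja | hjb
        · have hj2' : 2 ≤ j := by
            by_contra h2
            have hj1' : j = 1 := by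
              have := (Set.mem_Icc.1 hjI).1; omega
            rw [hj1', hpa1] at hja
            exact notMem_empty _ hja
          rcases Nat.lt_or_ge j (i'+1) with hlt | hge
          · have hg := hgen j (i'+1) hj2' hlt (by omega)
            rw [eq_empty_iff_forall_notMem] at hg
            exact hg q.1 ⟨hja, hq1pa⟩
          · have hgt : i' + 1 < j := by omega
            have hg := hgen (i'+1) j (by omega) hgt (Set.mem_Icc.1 hjI).2
            rw [eq_empty_iff_forall_notMem] at hg
            exact hg q.1 ⟨hq1pa, hja⟩
        · have hjk : j < k := by
            rcases eq_or_lt_of_le (Set.mem_Icc.1 hjI).2 with h | h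
            · exfalso; rw [h, hpbk] at hjb; exact notMem_empty _ hjb
            · exact h
          have hjb' : q.1 ∈ Prod.fst '' α (j+1) := by
            rw [← hpbpa j (Set.mem_Icc.1 hjI).1 hjk]; exact hjb
          rcases Nat.lt_or_ge (j+1) (i'+1) with hlt | hge
          · have hg := hgen (j+1) (i'+1) (by omega) hlt (by omega)
            rw [eq_empty_iff_forall_notMem] at hg
            exact hg q.1 ⟨hjb', hq1pa⟩
          · have hgt : i' + 1 < j + 1 := by omega
            have hg := hgen (i'+1) (j+1) (by omega) hgt (by omega)
            rw [eq_empty_iff_forall_notMem] at hg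
            exact hg q.1 ⟨hq1pa, hjb'⟩
      have hi's : i' ∈ Finset.Icc 1 k := Finset.mem_Icc.2 ⟨hi'1, le_of_lt hi'k⟩
      have hi1s : i' + 1 ∈ (Finset.Icc 1 k).erase i' :=
        Finset.mem_erase.2 ⟨by omega, Finset.mem_Icc.2 ⟨by omega, hi'k⟩⟩
      have hsplit : ∀ r : G × unitInterval, P r =
          (chi (upSet (Sp i') \ Sp i') r + chi (upSet (Sp (i'+1)) \ Sp (i'+1)) r)
          + ∑ j ∈ ((Finset.Icc 1 k).erase i').erase (i'+1), chi (upSet (Sp j) \ Sp j) r := by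
        intro r
        have e2 : chi (upSet (Sp (i'+1)) \ Sp (i'+1)) r
            + ∑ j ∈ ((Finset.Icc 1 k).erase i').erase (i'+1), chi (upSet (Sp j) \ Sp j) r
            = ∑ j ∈ (Finset.Icc 1 k).erase i', chi (upSet (Sp j) \ Sp j) r :=
          Finset.add_sum_erase _ (fun j => chi (upSet (Sp j) \ Sp j) r) hi1s
        have e1 : chi (upSet (Sp i') \ Sp i') r
            + ∑ j ∈ (Finset.Icc 1 k).erase i', chi (upSet (Sp j) \ Sp j) r
            = ∑ j ∈ Finset.Icc 1 k, chi (upSet (Sp j) \ Sp j) r :=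
          Finset.add_sum_erase _ (fun j => chi (upSet (Sp j) \ Sp j) r) hi's
        simp only [hPdef]
        rw [← e1, ← e2, ← add_assoc]
      have hrest : ∀ᶠ r in 𝓝 q, ∀ j ∈ ((Finset.Icc 1 k).erase i').erase (i'+1),
          chi (upSet (Sp j) \ Sp j) r = chi (upSet (Sp j) \ Sp j) q := by
        rw [Finset.eventually_all]
        intro j hj
        have hjI : j ∈ Set.Icc 1 k := by
          have := Finset.mem_of_mem_erase (Finset.mem_of_mem_erase hj)
          rw [Finset.mem_Icc] at this; exact Set.mem_Icc.2 this
        have hjne1 : j ≠ i' + 1 := (Finset.mem_erase.1 hj).1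
        have hjne : j ≠ i' := (Finset.mem_erase.1 (Finset.mem_of_mem_erase hj)).1
        exact hpiece j hjI q (hnotS q hqS j hjI) (huniq j hjI hjne hjne1)
      have hpairq := hpair i' hi'1 hi'k q
        (hnotS q hqS i' (Set.mem_Icc.2 ⟨hi'1, le_of_lt hi'k⟩))
        (hnotS q hqS _ (Set.mem_Icc.2 ⟨by omega, hi'k⟩)) hi'pb
      filter_upwards [hrest, hpairq] with r h1 h2
      rw [hsplit r, hsplit q, Finset.sum_congr rfl h1, h2]
    · push_neg at hfr
      have hev : ∀ᶠ r in 𝓝 q, ∀ j ∈ Finset.Icc 1 k,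
          chi (upSet (Sp j) \ Sp j) r = chi (upSet (Sp j) \ Sp j) q := by
        rw [Finset.eventually_all]
        intro j hj
        have hjI : j ∈ Set.Icc 1 k := Set.mem_Icc.2 (Finset.mem_Icc.1 hj)
        exact hpiece j hjI q (hnotS q hqS j hjI) (hfr j hjI)
      filter_upwards [hev] with r h1
      simp only [hPdef]
      exact Finset.sum_congr rfl h1
  -- values at bottom and top
  have hbotS : ∀ x : G, ((x, (0 : unitInterval)) : G × unitInterval) ∉ S :=
    fun x hx => (hsub _ hx).1 rfl
  have htopS : ∀ x : G, ((x, (1 : unitInterval)) : G × unitInterval) ∉ S :=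
    fun x hx => (hsub _ hx).2 rfl
  have hPbot : ∀ x : G, P ((x, 0) : G × unitInterval) = 1 := by
    intro x
    simp only [hPdef]
    have hcongr : ∀ j ∈ Finset.Icc 1 k,
        chi (upSet (Sp j) \ Sp j) ((x, 0) : G × unitInterval) = chi (Prod.fst '' Sp j) x := by
      intro j hj
      have hjI : j ∈ Set.Icc 1 k := Set.mem_Icc.2 (Finset.mem_Icc.1 hj)
      rw [chi_eq_iff]
      constructor
      · intro hm; exact hupA j _ hm.1
      · intro hm
        obtain ⟨p, hp, hpx⟩ := hm
        have hp' : ((x, p.2) : G × unitInterval) ∈ Sp j := by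
          rw [← hpx, Prod.mk.eta]; exact hp
        refine ⟨⟨p.2, hp', unitInterval.nonneg'⟩, ?_⟩
        intro hSp
        exact hbotS x (hSpS j hjI hSp)
    rw [Finset.sum_congr rfl hcongr]
    exact hbottom x
  have hPtop : ∀ x : G, P ((x, 1) : G × unitInterval) = 0 := by
    intro x
    simp only [hPdef]
    apply Finset.sum_eq_zero
    intro j hj
    have hjI : j ∈ Set.Icc 1 k := Set.mem_Icc.2 (Finset.mem_Icc.1 hj)
    apply chi_of_not_mem
    rintro ⟨⟨s, hs, hle⟩, -⟩
    have hs1 : s = 1 := le_antisymm unitInterval.le_one' hle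
    rw [hs1] at hs
    exact htopS x (hSpS j hjI hs)
  -- ===== assemble the separation =====
  have hUopen : IsOpen {q : G × unitInterval | q ∉ S ∧ P q = 1} := by
    rw [isOpen_iff_mem_nhds]
    intro q hq
    filter_upwards [hScl.isOpen_compl.mem_nhds hq.1, hloc q hq.1] with r hr1 hr2
    exact ⟨hr1, hr2.trans hq.2⟩
  have hVopen : IsOpen {q : G × unitInterval | q ∉ S ∧ P q = 0} := by
    rw [isOpen_iff_mem_nhds]
    intro q hq
    filter_upwards [hScl.isOpen_compl.mem_nhds hq.1, hloc q hq.1] with r hr1 hr2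
    exact ⟨hr1, hr2.trans hq.2⟩
  refine ⟨{q : G × unitInterval | q ∉ S ∧ P q = 1}, {q : G × unitInterval | q ∉ S ∧ P q = 0},
    ?_, ?_, ?_, ?_, ⟨_, hUopen, ?_⟩, ⟨_, hVopen, ?_⟩⟩
  · ext q
    simp only [mem_union, mem_setOf_eq, mem_diff, mem_univ, true_and]
    constructor
    · rintro (⟨h1, -⟩ | ⟨h1, -⟩) <;> exact h1
    · intro h1
      rcases zmod2_cases (P q) with h0 | hone
      · right; exact ⟨h1, h0⟩
      · left; exact ⟨h1, hone⟩
  · rw [eq_empty_iff_forall_notMem]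
    rintro q ⟨⟨-, h1⟩, ⟨-, h0⟩⟩
    rw [h1] at h0
    exact zmod2_one_ne_zero h0
  · rintro ⟨x, t⟩ ⟨-, ht⟩
    have ht0 : t = 0 := ht
    subst ht0
    exact ⟨hbotS x, hPbot x⟩
  · rintro ⟨x, t⟩ ⟨-, ht⟩
    have ht1 : t = 1 := ht
    subst ht1
    exact ⟨htopS x, hPtop x⟩
  · ext q
    simp only [mem_inter_iff, mem_diff, mem_univ, true_and, mem_setOf_eq]
    exact ⟨fun hq => ⟨hq.1, hq⟩, fun hq => hq.2⟩
  · ext q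
    simp only [mem_inter_iff, mem_diff, mem_univ, true_and, mem_setOf_eq]
    exact ⟨fun hq => ⟨hq.1, hq⟩, fun hq => hq.2⟩
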